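/- Let H be an N×M complex matrix, σ² > 0, and D an M×M Hermitian positive semidefinite matrix such that H v = 0 for every v in the kernel of D (equivalently, range(Hᴴ) ⊆ range(D)). Then the function S ↦ log₂ det(I_N + (1/σ²) H S Hᴴ) − tr(D S) is bounded from above on the set of M×M Hermitian positive semidefinite matrices S. -/

import Mathlib

open Matrix ComplexOrder Finset
open scoped MatrixOrder

/-- The Lagrangian-style objective `log₂ det(I_N + (1/σ²) H S Hᴴ) − tr(D S)`. -/
noncomputable def dualObj {N M : ℕ} (H : Matrix (Fin N) (Fin M) ℂ) (σ2 : ℝ)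
    (D : Matrix (Fin M) (Fin M) ℂ) (S : Matrix (Fin M) (Fin M) ℂ) : ℝ :=
  Real.logb 2 ((1 + σ2⁻¹ • (H * S * Hᴴ)).det.re) - ((D * S).trace).re


lemma exists_dom {N M : ℕ} (H : Matrix (Fin N) (Fin M) ℂ) (D : Matrix (Fin M) (Fin M) ℂ)
    (hD : D.PosSemidef)
    (hker : ∀ v : Fin M → ℂ, D *ᵥ v = 0 → H *ᵥ v = 0) :
    ∃ c : ℝ, 0 ≤ c ∧ ∀ v : Fin M → ℂ,
      ∑ j, Complex.normSq ((H *ᵥ v) j) ≤ c * (star v ⬝ᵥ D *ᵥ v).re := by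
  classical
  have hDH : D.IsHermitian := hD.1
  set U : Matrix (Fin M) (Fin M) ℂ := (hDH.eigenvectorUnitary : Matrix (Fin M) (Fin M) ℂ)
    with hUdef
  set lam : Fin M → ℝ := hDH.eigenvalues with hlamdef
  have hspec : D = U * diagonal (RCLike.ofReal ∘ lam) * star U := hDH.spectral_theorem
  have hUU : star U * U = 1 := mem_unitaryGroup_iff'.mp hDH.eigenvectorUnitary.2
  have hUU' : U * star U = 1 := mem_unitaryGroup_iff.mp hDH.eigenvectorUnitary.2
  have hlam0 : ∀ i, 0 ≤ lam i := hD.eigenvalues_nonneg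
  set G : Matrix (Fin N) (Fin M) ℂ := H * U with hGdef
  have hDU : D * U = U * diagonal (RCLike.ofReal ∘ lam) := by
    rw [hspec, mul_assoc, hUU, mul_one]
  have hcol : ∀ i, lam i = 0 → ∀ j, G j i = 0 := by
    intro i hi j
    have hDu : D *ᵥ (U *ᵥ Pi.single i 1) = 0 := by
      rw [mulVec_mulVec, hDU, ← mulVec_mulVec, diagonal_mulVec_single]
      simp [Function.comp, hi]
    have hHu := hker _ hDu
    have h0 : G *ᵥ Pi.single i 1 = 0 := by rw [hGdef, ← mulVec_mulVec]; exact hHu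
    have := congrFun h0 j
    simpa [mulVec_single] using this
  refine ⟨∑ i, if lam i = 0 then 0 else (∑ j, Complex.normSq (G j i)) / lam i, ?_, ?_⟩
  · refine Finset.sum_nonneg fun i _ => ?_
    split
    · exact le_refl _
    · exact div_nonneg (Finset.sum_nonneg fun j _ => Complex.normSq_nonneg _) (hlam0 i)
  intro v
  set w : Fin M → ℂ := star U *ᵥ v with hwdef
  have hv : U *ᵥ w = v := by rw [hwdef, mulVec_mulVec, hUU', one_mulVec]
  have hHv : H *ᵥ v = G *ᵥ w := by rw [← hv, mulVec_mulVec]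
  have hstarw : star w = star v ᵥ* U := by
    rw [hwdef, star_mulVec]
    congr 1
    rw [star_eq_conjTranspose, conjTranspose_conjTranspose]
  have hform : (star v ⬝ᵥ D *ᵥ v).re = ∑ i, lam i * Complex.normSq (w i) := by
    have h1 : D *ᵥ v = U *ᵥ (diagonal (RCLike.ofReal ∘ lam) *ᵥ w) := by
      rw [hwdef, mulVec_mulVec, mulVec_mulVec, ← hspec]
    rw [h1, dotProduct_mulVec, ← hstarw, dotProduct, Complex.re_sum]
    refine Finset.sum_congr rfl fun i _ => ?_
    rw [mulVec_diagonal]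
    have hz : star w i * ((RCLike.ofReal ∘ lam) i * w i)
        = ((lam i : ℝ) : ℂ) * ((Complex.normSq (w i) : ℝ) : ℂ) := by
      simp only [Function.comp_apply, Pi.star_apply, RCLike.star_def]
      rw [show ((RCLike.ofReal (lam i) : ℂ)) = ((lam i : ℝ) : ℂ) from rfl]
      rw [Complex.normSq_eq_conj_mul_self]
      ring
    rw [hz, ← Complex.ofReal_mul, Complex.ofReal_re]
  rw [hHv]
  have key : ∀ j, Complex.normSq ((G *ᵥ w) j) ≤
      (∑ i, lam i * Complex.normSq (w i)) *
        (∑ i, if lam i = 0 then 0 else Complex.normSq (G j i) / lam i) := by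
    intro j
    set x : Fin M → ℝ := fun i => Real.sqrt (lam i) * ‖w i‖ with hx
    set y : Fin M → ℝ := fun i => if lam i = 0 then 0
      else ‖G j i‖ / Real.sqrt (lam i) with hy
    have habs : ‖(G *ᵥ w) j‖ ≤ ∑ i, x i * y i := by
      have h1 : (G *ᵥ w) j = ∑ i, G j i * w i := by
        simp [mulVec, dotProduct]
      rw [h1]
      calc ‖∑ i, G j i * w i‖ = ‖∑ i, G j i * w i‖ :=
            rfl
        _ ≤ ∑ i, ‖G j i * w i‖ := norm_sum_le _ _
        _ ≤ ∑ i, x i * y i := by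
            refine Finset.sum_le_sum fun i _ => ?_
            rcases eq_or_ne (lam i) 0 with h0 | h0
            · simp [hx, hy, hcol i h0 j, h0]
            · have hsp : 0 < Real.sqrt (lam i) := Real.sqrt_pos.mpr
                (lt_of_le_of_ne (hlam0 i) (Ne.symm h0))
              have heq : x i * y i = ‖G j i‖ * ‖w i‖ := by
                rw [hx, hy]
                simp only [if_neg h0]
                field_simp
              rw [heq, norm_mul]
    have hxnn : ∀ i, 0 ≤ x i := fun i =>
      mul_nonneg (Real.sqrt_nonneg _) (norm_nonneg _)
    calc Complex.normSq ((G *ᵥ w) j) = ‖(G *ᵥ w) j‖ ^ 2 := by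
          rw [Complex.sq_norm]
      _ ≤ (∑ i, x i * y i) ^ 2 := by
          apply pow_le_pow_left₀ (norm_nonneg _) habs
      _ ≤ (∑ i, x i ^ 2) * (∑ i, y i ^ 2) := Finset.sum_mul_sq_le_sq_mul_sq _ _ _
      _ = (∑ i, lam i * Complex.normSq (w i)) *
          (∑ i, if lam i = 0 then 0 else Complex.normSq (G j i) / lam i) := by
          congr 1
          · refine Finset.sum_congr rfl fun i _ => ?_
            simp only [hx]
            rw [mul_pow, Real.sq_sqrt (hlam0 i), Complex.sq_norm]
          · refine Finset.sum_congr rfl fun i _ => ?_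
            by_cases h0 : lam i = 0
            · simp [hy, h0]
            · simp only [hy, if_neg h0]
              rw [div_pow, Real.sq_sqrt (hlam0 i), Complex.sq_norm]
  have hcc : ∑ j, ∑ i, (if lam i = 0 then 0 else Complex.normSq (G j i) / lam i)
      = ∑ i, if lam i = 0 then 0 else (∑ j, Complex.normSq (G j i)) / lam i := by
    rw [Finset.sum_comm]
    refine Finset.sum_congr rfl fun i _ => ?_
    split
    · simp
    · rw [Finset.sum_div]
  calc ∑ j, Complex.normSq ((G *ᵥ w) j)
      ≤ ∑ j, (∑ i, lam i * Complex.normSq (w i)) *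
          (∑ i, if lam i = 0 then 0 else Complex.normSq (G j i) / lam i) :=
        Finset.sum_le_sum fun j _ => key j
    _ = (∑ i, if lam i = 0 then 0 else (∑ j, Complex.normSq (G j i)) / lam i) *
        (star v ⬝ᵥ D *ᵥ v).re := by
        rw [← Finset.mul_sum, hcc, hform, mul_comm]


section Stmt3Aux

lemma re_form_nonneg {n : ℕ} {A : Matrix (Fin n) (Fin n) ℂ} (hA : A.PosSemidef)
    (v : Fin n → ℂ) : 0 ≤ (star v ⬝ᵥ A *ᵥ v).re := by
  have h := hA.dotProduct_mulVec_nonneg v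
  rw [Complex.le_def] at h
  simpa using h.1

lemma form_HtH {N M : ℕ} (H : Matrix (Fin N) (Fin M) ℂ) (u : Fin M → ℂ) :
    (star u ⬝ᵥ (Hᴴ * H) *ᵥ u).re = ∑ j, Complex.normSq ((H *ᵥ u) j) := by
  rw [← mulVec_mulVec, dotProduct_mulVec, ← star_mulVec, dotProduct, Complex.re_sum]
  refine Finset.sum_congr rfl fun j _ => ?_
  simp [Complex.normSq_apply]

lemma smul_psd {n : ℕ} {A : Matrix (Fin n) (Fin n) ℂ} (hA : A.PosSemidef) {r : ℝ} (hr : 0 ≤ r) :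
    (r • A).PosSemidef := by
  refine Matrix.PosSemidef.of_dotProduct_mulVec_nonneg ?_ ?_
  · unfold Matrix.IsHermitian
    rw [conjTranspose_smul, hA.1]
    norm_num
  · intro x
    rw [smul_mulVec, dotProduct_smul]
    have h0 : (0:ℂ) ≤ star x ⬝ᵥ A *ᵥ x := hA.dotProduct_mulVec_nonneg x
    rw [RCLike.real_smul_eq_coe_mul]
    exact mul_nonneg (Complex.zero_le_real.mpr hr) h0

lemma trace_eq_sum_eigen {n : ℕ} {B : Matrix (Fin n) (Fin n) ℂ} (hB : B.IsHermitian) :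
    B.trace = ∑ i, (hB.eigenvalues i : ℂ) := by
  conv_lhs => rw [hB.spectral_theorem]
  rw [Unitary.conjStarAlgAut_apply, trace_mul_cycle, Unitary.coe_star_mul_self, one_mul,
    trace_diagonal]
  simp

lemma trace_mul_psd {M : ℕ} (A : Matrix (Fin M) (Fin M) ℂ) {S : Matrix (Fin M) (Fin M) ℂ}
    (hS : S.PosSemidef) :
    (A * S).trace = ∑ j, (star (fun i => (CFC.sqrt S) i j) ⬝ᵥ A *ᵥ (fun i => (CFC.sqrt S) i j)) := by
  have hBH : (CFC.sqrt S)ᴴ = CFC.sqrt S := (CFC.sqrt_nonneg S).posSemidef.1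
  have hconj : ∀ i j, (CFC.sqrt S) j i = starRingEnd ℂ ((CFC.sqrt S) i j) := by
    intro i j
    conv_lhs => rw [← hBH]
    rw [conjTranspose_apply, RCLike.star_def]
  conv_lhs => rw [← CFC.sqrt_mul_sqrt_self S hS.nonneg, ← mul_assoc, trace_mul_comm]
  rw [Matrix.trace]
  refine Finset.sum_congr rfl fun j _ => ?_
  simp only [Matrix.diag_apply, Matrix.mul_apply, mulVec, dotProduct, Pi.star_apply]
  refine Finset.sum_congr rfl fun i _ => ?_
  rw [hconj]
  simp [RCLike.star_def]

end Stmt3Aux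

lemma final_arith (n : ℕ) (k t s dre : ℝ) (hk0 : 0 ≤ k) (ht0 : 0 ≤ t) (hs0 : 0 ≤ s)
    (hst : s ≤ k * t) (hdpos : 0 < dre) (hdle : dre ≤ ((n:ℝ) + s) ^ n) :
    Real.logb 2 dre - t ≤ n * Real.logb 2 ((n:ℝ) + 1) +
      ((2 * n * Real.sqrt (1 + k) / Real.log 2) ^ 2 + 1) / 2 := by
  set a : ℝ := 2 * n * Real.sqrt (1 + k) / Real.log 2 with ha
  have hlog2 : 0 < Real.log 2 := Real.log_pos one_lt_two
  have hstep1 : Real.logb 2 dre ≤ n * Real.logb 2 ((n:ℝ) + s) := by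
    calc Real.logb 2 dre ≤ Real.logb 2 (((n:ℝ) + s) ^ n) :=
          Real.logb_le_logb_of_le one_lt_two hdpos hdle
      _ = n * Real.logb 2 ((n:ℝ) + s) := Real.logb_pow _ _ _
  rcases Nat.eq_zero_or_pos n with hn | hn
  · subst hn
    norm_num at hstep1 ⊢
    nlinarith [sq_nonneg a, ht0, hstep1]
  · have hn1 : (1:ℝ) ≤ n := by exact_mod_cast hn
    have hn0 : (0:ℝ) ≤ n := by linarith
    have hstep2 : Real.logb 2 ((n:ℝ) + s)
        ≤ Real.logb 2 ((n:ℝ) + 1) + Real.logb 2 (1 + k * t) := by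
      calc Real.logb 2 ((n:ℝ) + s)
          ≤ Real.logb 2 (((n:ℝ) + 1) * (1 + s)) := by
            apply Real.logb_le_logb_of_le one_lt_two (by linarith)
            nlinarith
        _ = Real.logb 2 ((n:ℝ) + 1) + Real.logb 2 (1 + s) :=
            Real.logb_mul (by linarith) (by linarith)
        _ ≤ Real.logb 2 ((n:ℝ) + 1) + Real.logb 2 (1 + k * t) := by
            have := Real.logb_le_logb_of_le one_lt_two
              (show (0:ℝ) < 1 + s by linarith) (show 1 + s ≤ 1 + k * t by linarith)
            linarith
    have hkt0 : 0 ≤ k * t := by nlinarith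
    have hlogkt : Real.log (1 + k * t) ≤ 2 * (Real.sqrt (1 + k) * Real.sqrt (1 + t)) := by
      have h1 : Real.log (1 + k * t) = 2 * Real.log (Real.sqrt (1 + k * t)) := by
        rw [Real.log_sqrt (by linarith)]; ring
      have h2 : Real.log (Real.sqrt (1 + k * t)) ≤ Real.sqrt (1 + k * t) := by
        have := Real.log_le_sub_one_of_pos (show (0:ℝ) < Real.sqrt (1 + k * t) from
          Real.sqrt_pos.mpr (by linarith))
        linarith
      have h3 : Real.sqrt (1 + k * t) ≤ Real.sqrt (1 + k) * Real.sqrt (1 + t) := by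
        rw [← Real.sqrt_mul (by linarith)]
        apply Real.sqrt_le_sqrt
        nlinarith
      linarith
    have hfin : (n:ℝ) * Real.logb 2 (1 + k * t) ≤ (a ^ 2 + 1) / 2 + t / 2 := by
      have e1 : (n:ℝ) * Real.logb 2 (1 + k * t) = (n:ℝ) * Real.log (1 + k * t) / Real.log 2 := by
        rw [Real.logb]; ring
      have e2 : (n:ℝ) * Real.log (1 + k * t) / Real.log 2
          ≤ (n:ℝ) * (2 * (Real.sqrt (1 + k) * Real.sqrt (1 + t))) / Real.log 2 :=
        (div_le_div_iff_of_pos_right hlog2).mpr (mul_le_mul_of_nonneg_left hlogkt hn0)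
      have e3 : (n:ℝ) * (2 * (Real.sqrt (1 + k) * Real.sqrt (1 + t))) / Real.log 2
          = a * Real.sqrt (1 + t) := by
        rw [ha]; ring
      have e4 : a * Real.sqrt (1 + t) ≤ (a ^ 2 + (1 + t)) / 2 := by
        nlinarith [sq_nonneg (a - Real.sqrt (1 + t)),
          Real.sq_sqrt (show (0:ℝ) ≤ 1 + t by linarith)]
      linarith
    have hmul : (n:ℝ) * Real.logb 2 ((n:ℝ) + s)
        ≤ (n:ℝ) * Real.logb 2 ((n:ℝ) + 1) + (n:ℝ) * Real.logb 2 (1 + k * t) := by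
      have := mul_le_mul_of_nonneg_left hstep2 hn0
      rw [mul_add] at this
      exact this
    linarith [hstep1, hmul, hfin, ht0]

lemma bounded_of_dom {N M : ℕ} (H : Matrix (Fin N) (Fin M) ℂ) (σ2 : ℝ) (hσ2 : 0 < σ2)
    (D : Matrix (Fin M) (Fin M) ℂ) (hD : D.PosSemidef)
    (hker : ∀ v : Fin M → ℂ, D.mulVec v = 0 → H.mulVec v = 0)
    (c : ℝ) (hc0 : 0 ≤ c)
    (hc : ∀ v : Fin M → ℂ,
      ∑ j, Complex.normSq ((H *ᵥ v) j) ≤ c * (star v ⬝ᵥ D *ᵥ v).re) :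
    ∃ B : ℝ, ∀ S : Matrix (Fin M) (Fin M) ℂ, S.PosSemidef →
      Real.logb 2 ((1 + σ2⁻¹ • (H * S * Hᴴ)).det.re) - ((D * S).trace).re ≤ B := by
  classical
  set k : ℝ := σ2⁻¹ * c with hk
  have hσinv : (0:ℝ) ≤ σ2⁻¹ := inv_nonneg.mpr hσ2.le
  have hk0 : 0 ≤ k := mul_nonneg hσinv hc0
  have hlog2 : 0 < Real.log 2 := Real.log_pos one_lt_two
  refine ⟨N * Real.logb 2 ((N:ℝ) + 1) +
    ((2 * N * Real.sqrt (1 + k) / Real.log 2) ^ 2 + 1) / 2, ?_⟩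
  intro S hS
  set t : ℝ := ((D * S).trace).re with ht
  have ht_eq : t = ∑ j, ((star (fun i => (CFC.sqrt S) i j) ⬝ᵥ D *ᵥ (fun i => (CFC.sqrt S) i j)).re) := by
    rw [ht, trace_mul_psd D hS, Complex.re_sum]
  have ht0 : 0 ≤ t := by
    rw [ht_eq]; exact Finset.sum_nonneg fun j _ => re_form_nonneg hD _
  have hPS : (Hᴴ * H * S).trace
      = ∑ j, (star (fun i => (CFC.sqrt S) i j) ⬝ᵥ (Hᴴ * H) *ᵥ (fun i => (CFC.sqrt S) i j)) :=
    trace_mul_psd _ hS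
  have hr_le : ((Hᴴ * H * S).trace).re ≤ c * t := by
    rw [hPS, Complex.re_sum, ht_eq, Finset.mul_sum]
    refine Finset.sum_le_sum fun j _ => ?_
    calc (star (fun i => (CFC.sqrt S) i j) ⬝ᵥ (Hᴴ * H) *ᵥ (fun i => (CFC.sqrt S) i j)).re
        = ∑ l, Complex.normSq ((H *ᵥ (fun i => (CFC.sqrt S) i j)) l) := form_HtH H _
      _ ≤ c * (star (fun i => (CFC.sqrt S) i j) ⬝ᵥ D *ᵥ (fun i => (CFC.sqrt S) i j)).re := hc _
  have hr0 : 0 ≤ ((Hᴴ * H * S).trace).re := by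
    rw [hPS, Complex.re_sum]
    refine Finset.sum_nonneg fun j _ => ?_
    rw [form_HtH]
    exact Finset.sum_nonneg fun l _ => Complex.normSq_nonneg _
  set A := σ2⁻¹ • (H * S * Hᴴ) with hA
  have hApsd : A.PosSemidef := smul_psd (hS.mul_mul_conjTranspose_same H) hσinv
  have htrA : A.trace.re = σ2⁻¹ * ((Hᴴ * H * S).trace).re := by
    rw [hA, trace_smul, trace_mul_cycle H S Hᴴ]
    simp [Complex.smul_re]
  have hs_le : A.trace.re ≤ k * t := by
    rw [htrA, hk, mul_assoc]
    exact mul_le_mul_of_nonneg_left hr_le hσinv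
  have hs0 : 0 ≤ A.trace.re := by rw [htrA]; exact mul_nonneg hσinv hr0
  have h1A : (1 + A).PosDef := Matrix.PosDef.add_posSemidef Matrix.PosDef.one hApsd
  have hHerm : (1 + A).IsHermitian := h1A.1
  have hμpos : ∀ i, 0 < hHerm.eigenvalues i := fun i => h1A.eigenvalues_pos i
  have hdet : (1 + A).det.re = ∏ i, hHerm.eigenvalues i := by
    rw [hHerm.det_eq_prod_eigenvalues]
    norm_cast
  have hdetpos : 0 < (1 + A).det.re := by
    rw [hdet]; exact Finset.prod_pos fun i _ => hμpos i
  have htr : (N:ℝ) + A.trace.re = ∑ i, hHerm.eigenvalues i := by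
    have h := trace_eq_sum_eigen hHerm
    rw [trace_add, trace_one] at h
    have := congrArg Complex.re h
    simpa [Complex.re_sum, Fintype.card_fin] using this
  have hdet_le : (1 + A).det.re ≤ ((N:ℝ) + A.trace.re) ^ N := by
    rw [hdet, htr]
    calc ∏ i, hHerm.eigenvalues i
        ≤ ∏ _i : Fin N, (∑ i, hHerm.eigenvalues i) :=
          Finset.prod_le_prod (fun i _ => (hμpos i).le)
            (fun i _ => Finset.single_le_sum (fun i _ => (hμpos i).le) (Finset.mem_univ i))
      _ = (∑ i, hHerm.eigenvalues i) ^ N := by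
          rw [Finset.prod_const, Finset.card_univ, Fintype.card_fin]
  exact final_arith N k t A.trace.re ((1 + A).det.re) hk0 ht0 hs0 hs_le hdetpos hdet_le

/-- converse direction of Lemma 1: if `D ⪰ 0` and `H v = 0` for every
`v ∈ ker D` (equivalently `range(Hᴴ) ⊆ range(D)`), then the objective
`S ↦ log₂ det(I_N + (1/σ²) H S Hᴴ) − tr(D S)` is bounded from above on the PSD cone. -/
theorem stmt_3 {N M : ℕ} (H : Matrix (Fin N) (Fin M) ℂ) (σ2 : ℝ) (hσ2 : 0 < σ2)
    (D : Matrix (Fin M) (Fin M) ℂ) (hD : D.PosSemidef)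
    (hker : ∀ v : Fin M → ℂ, D.mulVec v = 0 → H.mulVec v = 0) :
    ∃ B : ℝ, ∀ S : Matrix (Fin M) (Fin M) ℂ, S.PosSemidef →
      dualObj H σ2 D S ≤ B := by
  obtain ⟨c, hc0, hc⟩ := exists_dom H D hD hker
  obtain ⟨B, hB⟩ := bounded_of_dom H σ2 hσ2 D hD hker c hc0 hc
  exact ⟨B, fun S hS => by simpa [dualObj] using hB S hS⟩
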